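/- The canonical dual function P^d is concave on the set S⁺♯; that is, P^d(ς,σ₁,σ₂) = −½ cᵀ G(ς,σ₁)⁻¹ c − ¼ Σᵢ (fᵢ+σ₁ᵢ+σ₂ᵢ)²/σ₂ᵢ − ½ ς² − α ς, viewed as a function of (ς,σ₁,σ₂) ∈ ℝ×ℝⁿ×ℝⁿ, is concave on S⁺♯. -/

import Mathlib

open Matrix BigOperators

lemma sq_div_le (x y z : ℝ) (hy : 0 < y) : 2*x*z - y*z^2 ≤ x^2 / y := by
  rw [← sub_nonneg]
  have h : x^2/y - (2*x*z - y*z^2) = (x - y*z)^2 / y := by field_simp; ring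
  rw [h]; positivity

lemma combo_pos {a b x y : ℝ} (ha : 0 ≤ a) (hb : 0 ≤ b) (hab : a + b = 1)
    (hx : 0 < x) (hy : 0 < y) : 0 < a*x + b*y := by
  nlinarith [mul_nonneg ha (sub_nonneg.2 (min_le_left x y)),
    mul_nonneg hb (sub_nonneg.2 (min_le_right x y)), lt_min hx hy]

lemma sq_div_combo {a b x0 x1 y0 y1 : ℝ} (ha : 0 ≤ a) (hb : 0 ≤ b) (hab : a + b = 1)
    (hy0 : 0 < y0) (hy1 : 0 < y1) :
    (a*x0+b*x1)^2/(a*y0+b*y1) ≤ a*(x0^2/y0) + b*(x1^2/y1) := by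
  have hv := combo_pos ha hb hab hy0 hy1
  have e : (a*x0+b*x1)^2/(a*y0+b*y1)
      = a*(2*x0*((a*x0+b*x1)/(a*y0+b*y1)) - y0*((a*x0+b*x1)/(a*y0+b*y1))^2)
      + b*(2*x1*((a*x0+b*x1)/(a*y0+b*y1)) - y1*((a*x0+b*x1)/(a*y0+b*y1))^2) := by
    field_simp
    ring
  rw [e]
  exact add_le_add (mul_le_mul_of_nonneg_left (sq_div_le _ _ _ hy0) ha)
    (mul_le_mul_of_nonneg_left (sq_div_le _ _ _ hy1) hb)

lemma quad_le_inv_quad {n : ℕ} {M : Matrix (Fin n) (Fin n) ℝ} (hM : M.PosDef)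
    (c x : Fin n → ℝ) :
    2 * (c ⬝ᵥ x) - x ⬝ᵥ (M *ᵥ x) ≤ c ⬝ᵥ (M⁻¹ *ᵥ c) := by
  have hinv : M * M⁻¹ = 1 := Matrix.mul_nonsing_inv M hM.det_pos.ne'.isUnit
  have h1 : M *ᵥ (M⁻¹ *ᵥ c) = c := by rw [Matrix.mulVec_mulVec, hinv, Matrix.one_mulVec]
  have hsymm : Mᵀ = M := by
    rw [← Matrix.conjTranspose_eq_transpose_of_trivial]; exact hM.isHermitian
  have h2 : (M⁻¹ *ᵥ c) ⬝ᵥ (M *ᵥ x) = c ⬝ᵥ x := by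
    rw [Matrix.dotProduct_mulVec, ← Matrix.mulVec_transpose, hsymm, h1]
  have hd := (posSemidef_iff_dotProduct_mulVec.1 hM.posSemidef).2 (x - M⁻¹ *ᵥ c)
  rw [star_trivial, Matrix.mulVec_sub, h1, dotProduct_sub, sub_dotProduct,
    sub_dotProduct] at hd
  have h4 : x ⬝ᵥ c = c ⬝ᵥ x := dotProduct_comm _ _
  have h5 : (M⁻¹ *ᵥ c) ⬝ᵥ c = c ⬝ᵥ (M⁻¹ *ᵥ c) := dotProduct_comm _ _
  linarith

lemma posDef_combo {n : ℕ} {M N : Matrix (Fin n) (Fin n) ℝ} {a b : ℝ}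
    (ha : 0 ≤ a) (hb : 0 ≤ b) (hab : a + b = 1)
    (hM : M.PosDef) (hN : N.PosDef) : (a • M + b • N).PosDef := by
  rw [posDef_iff_dotProduct_mulVec]
  constructor
  · show (a • M + b • N)ᴴ = _
    rw [Matrix.conjTranspose_add, Matrix.conjTranspose_smul, Matrix.conjTranspose_smul,
      star_trivial, star_trivial, hM.isHermitian.eq, hN.isHermitian.eq]
  · intro x hx
    have h0 := (posDef_iff_dotProduct_mulVec.1 hM).2 hx
    have h1 := (posDef_iff_dotProduct_mulVec.1 hN).2 hx
    rw [star_trivial] at h0 h1 ⊢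
    rw [Matrix.add_mulVec, Matrix.smul_mulVec, Matrix.smul_mulVec,
      dotProduct_add, dotProduct_smul, dotProduct_smul,
      smul_eq_mul, smul_eq_mul]
    exact combo_pos ha hb hab h0 h1

lemma inv_quad_combo {n : ℕ} {M N : Matrix (Fin n) (Fin n) ℝ} {a b : ℝ}
    (ha : 0 ≤ a) (hb : 0 ≤ b) (hab : a + b = 1)
    (hM : M.PosDef) (hN : N.PosDef) (c : Fin n → ℝ) :
    c ⬝ᵥ ((a • M + b • N)⁻¹ *ᵥ c) ≤ a * (c ⬝ᵥ (M⁻¹ *ᵥ c)) + b * (c ⬝ᵥ (N⁻¹ *ᵥ c)) := by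
  have hT : (a • M + b • N).PosDef := posDef_combo ha hb hab hM hN
  set x := (a • M + b • N)⁻¹ *ᵥ c with hx
  have hinv : (a • M + b • N) * (a • M + b • N)⁻¹ = 1 :=
    Matrix.mul_nonsing_inv _ hT.det_pos.ne'.isUnit
  have h1 : (a • M + b • N) *ᵥ x = c := by
    rw [hx, Matrix.mulVec_mulVec, hinv, Matrix.one_mulVec]
  have hsplit : x ⬝ᵥ ((a • M + b • N) *ᵥ x) = a * (x ⬝ᵥ (M *ᵥ x)) + b * (x ⬝ᵥ (N *ᵥ x)) := by
    rw [Matrix.add_mulVec, Matrix.smul_mulVec, Matrix.smul_mulVec,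
      dotProduct_add, dotProduct_smul, dotProduct_smul,
      smul_eq_mul, smul_eq_mul]
  have key : c ⬝ᵥ ((a • M + b • N)⁻¹ *ᵥ c)
      = a * (2 * (c ⬝ᵥ x) - x ⬝ᵥ (M *ᵥ x)) + b * (2 * (c ⬝ᵥ x) - x ⬝ᵥ (N *ᵥ x)) := by
    have hcx : x ⬝ᵥ c = c ⬝ᵥ x := dotProduct_comm _ _
    have := hsplit
    rw [h1, hcx] at this
    have : a * (x ⬝ᵥ (M *ᵥ x)) + b * (x ⬝ᵥ (N *ᵥ x)) = c ⬝ᵥ x := this.symm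
    rw [← hx]
    linear_combination (-2*(c ⬝ᵥ x)) * hab + this
  rw [key]
  exact add_le_add (mul_le_mul_of_nonneg_left (quad_le_inv_quad hM c x) ha)
    (mul_le_mul_of_nonneg_left (quad_le_inv_quad hN c x) hb)

/-- `G(ς,σ₁) = A + ς B + 2 diag(σ₁)`. -/
noncomputable def Gm {n : ℕ} (A B : Matrix (Fin n) (Fin n) ℝ) (ς : ℝ) (σ₁ : Fin n → ℝ) :
    Matrix (Fin n) (Fin n) ℝ :=
  A + ς • B + (2 : ℝ) • Matrix.diagonal σ₁

lemma Gm_combo {n : ℕ} (A B : Matrix (Fin n) (Fin n) ℝ) {a b : ℝ} (hab : a + b = 1)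
    (ς0 ς1 : ℝ) (σ0 σ1 : Fin n → ℝ) :
    Gm A B (a*ς0+b*ς1) (a • σ0 + b • σ1) = a • Gm A B ς0 σ0 + b • Gm A B ς1 σ1 := by
  have hb' : b = 1 - a := by linarith
  subst hb'
  ext i j
  simp [Gm, Matrix.add_apply, Matrix.smul_apply, Matrix.diagonal_apply, Pi.add_apply,
    Pi.smul_apply, smul_eq_mul, mul_ite]
  split <;> ring

/-- The canonical dual function `P^d(ς,σ₁,σ₂)`. -/
noncomputable def Pd {n : ℕ} (A B : Matrix (Fin n) (Fin n) ℝ) (α : ℝ) (c f : Fin n → ℝ)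
    (p : ℝ × (Fin n → ℝ) × (Fin n → ℝ)) : ℝ :=
  -(1/2) * (c ⬝ᵥ (Gm A B p.1 p.2.1)⁻¹.mulVec c)
    - (1/4) * ∑ i, (f i + p.2.1 i + p.2.2 i)^2 / p.2.2 i
    - (1/2) * p.1^2 - α * p.1

/-- The dual feasible set `S⁺♯`. -/
def Ssharp {n : ℕ} (A B : Matrix (Fin n) (Fin n) ℝ) (α : ℝ) :
    Set (ℝ × (Fin n → ℝ) × (Fin n → ℝ)) :=
  {p | -α ≤ p.1 ∧ (∀ i, 0 ≤ p.2.1 i) ∧ (∀ i, 0 < p.2.2 i) ∧ (Gm A B p.1 p.2.1).PosDef}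

theorem Pd_concave_on_Ssharp {n : ℕ} (hn : 0 < n)
    (A B : Matrix (Fin n) (Fin n) ℝ) (hA : A.IsSymm) (hB : B.PosSemidef)
    (α : ℝ) (hα : 0 < α) (c f : Fin n → ℝ) :
    ConcaveOn ℝ (Ssharp A B α) (Pd A B α c f) := by
  constructor
  · intro p hp q hq a b ha hb hab
    obtain ⟨hp1, hp2, hp3, hp4⟩ := hp
    obtain ⟨hq1, hq2, hq3, hq4⟩ := hq
    have hc1 : (a • p + b • q).1 = a * p.1 + b * q.1 := rfl
    refine ⟨?_, ?_, ?_, ?_⟩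
    · rw [hc1]
      nlinarith [mul_nonneg ha (by linarith : (0:ℝ) ≤ p.1 + α),
        mul_nonneg hb (by linarith : (0:ℝ) ≤ q.1 + α)]
    · intro i
      exact add_nonneg (mul_nonneg ha (hp2 i)) (mul_nonneg hb (hq2 i))
    · intro i
      exact combo_pos ha hb hab (hp3 i) (hq3 i)
    · show (Gm A B (a • p + b • q).1 (a • p + b • q).2.1).PosDef
      have : Gm A B (a • p + b • q).1 (a • p + b • q).2.1
          = a • Gm A B p.1 p.2.1 + b • Gm A B q.1 q.2.1 :=
        Gm_combo A B hab p.1 q.1 p.2.1 q.2.1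
      rw [this]
      exact posDef_combo ha hb hab hp4 hq4
  · intro p hp q hq a b ha hb hab
    obtain ⟨hp1, hp2, hp3, hp4⟩ := hp
    obtain ⟨hq1, hq2, hq3, hq4⟩ := hq
    have hG : Gm A B (a • p + b • q).1 (a • p + b • q).2.1
        = a • Gm A B p.1 p.2.1 + b • Gm A B q.1 q.2.1 :=
      Gm_combo A B hab p.1 q.1 p.2.1 q.2.1
    have H1 := inv_quad_combo ha hb hab hp4 hq4 c
    have H2 : ∑ i, (f i + (a • p + b • q).2.1 i + (a • p + b • q).2.2 i)^2
          / (a • p + b • q).2.2 i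
        ≤ a * ∑ i, (f i + p.2.1 i + p.2.2 i)^2 / p.2.2 i
          + b * ∑ i, (f i + q.2.1 i + q.2.2 i)^2 / q.2.2 i := by
      rw [Finset.mul_sum, Finset.mul_sum, ← Finset.sum_add_distrib]
      refine Finset.sum_le_sum fun i _ => ?_
      have e : f i + (a • p + b • q).2.1 i + (a • p + b • q).2.2 i
          = a * (f i + p.2.1 i + p.2.2 i) + b * (f i + q.2.1 i + q.2.2 i) := by
        show f i + (a * p.2.1 i + b * q.2.1 i) + (a * p.2.2 i + b * q.2.2 i) = _
        linear_combination (-(f i)) * hab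
      have e2 : (a • p + b • q).2.2 i = a * p.2.2 i + b * q.2.2 i := rfl
      rw [e, e2]
      exact sq_div_combo ha hb hab (hp3 i) (hq3 i)
    have H3 : a * (-(1/2) * p.1^2 - α * p.1) + b * (-(1/2) * q.1^2 - α * q.1)
        ≤ -(1/2) * ((a • p + b • q).1)^2 - α * ((a • p + b • q).1) := by
      show _ ≤ -(1/2) * (a * p.1 + b * q.1)^2 - α * (a * p.1 + b * q.1)
      nlinarith [mul_nonneg (mul_nonneg ha hb) (sq_nonneg (p.1 - q.1))]
    simp only [smul_eq_mul, Pd]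
    rw [hG]
    nlinarith [H1, H2, H3]
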